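/- For 1 ≤ p < ∞, the projective tensor norm on ℓ^p_n ⊗ ℓ^1 coincides with the lattice p-norm: for x = Σ_{i=1}^n δ_i ⊗ x_i with x_i ∈ ℓ^1, the projective tensor norm of x equals ‖(Σ_i |x_i|^p)^{1/p}‖_{ℓ^1}, where the p-th powers, absolute values and p-th root are taken coordinatewise in ℓ^1. -/

import Mathlib

open scoped TensorProduct ENNReal
open Filter

/-- The projective tensor norm of an element of the algebraic tensor product of two
real normed spaces: the infimum of `Σ ‖a_k‖ ‖b_k‖` over all finite representations
`u = Σ a_k ⊗ b_k`. -/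
noncomputable def projTensorNorm {X Y : Type*} [NormedAddCommGroup X] [NormedAddCommGroup Y]
    [NormedSpace ℝ X] [NormedSpace ℝ Y] (u : X ⊗[ℝ] Y) : ℝ :=
  sInf {c : ℝ | ∃ (m : ℕ) (a : Fin m → X) (b : Fin m → Y),
    u = ∑ k, a k ⊗ₜ[ℝ] b k ∧ c = ∑ k, ‖a k‖ * ‖b k‖}

section Aux

open Filter

variable {X Y : Type*} [NormedAddCommGroup X] [NormedAddCommGroup Y]
  [NormedSpace ℝ X] [NormedSpace ℝ Y]

lemma projTensorNorm_bddBelow (u : X ⊗[ℝ] Y) :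
    BddBelow {c : ℝ | ∃ (m : ℕ) (a : Fin m → X) (b : Fin m → Y),
      u = ∑ k, a k ⊗ₜ[ℝ] b k ∧ c = ∑ k, ‖a k‖ * ‖b k‖} := by
  refine ⟨0, ?_⟩
  rintro c ⟨m, a, b, -, rfl⟩
  exact Finset.sum_nonneg fun k _ => mul_nonneg (norm_nonneg _) (norm_nonneg _)

lemma projTensorNorm_le_sum {ι : Type*} [Fintype ι] (a : ι → X) (b : ι → Y) :
    projTensorNorm (∑ k, a k ⊗ₜ[ℝ] b k) ≤ ∑ k, ‖a k‖ * ‖b k‖ := by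
  classical
  let e := Fintype.equivFin ι
  refine csInf_le (projTensorNorm_bddBelow _)
    ⟨Fintype.card ι, a ∘ e.symm, b ∘ e.symm, ?_, ?_⟩
  · exact (Equiv.sum_comp e.symm fun i => a i ⊗ₜ[ℝ] b i).symm
  · exact (Equiv.sum_comp e.symm fun i => ‖a i‖ * ‖b i‖).symm

end Aux

set_option maxHeartbeats 1000000 in
/-- For `1 ≤ p < ∞`, the projective tensor norm on `ℓ^p_n ⊗ ℓ¹` coincides
with the lattice `p`-norm: for `x = Σ_{i=1}^n δ_i ⊗ x_i` with `x_i ∈ ℓ¹`, writing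
`x_i = (t_{ij})_j`, the projective norm of `x` equals `Σ_j (Σ_i |t_{ij}|^p)^{1/p}`. -/
theorem projTensorNorm_lp_n_tensor_l1 (p : ℝ) (hp : 1 ≤ p) [Fact (1 ≤ ENNReal.ofReal p)] (n : ℕ)
    (x : Fin n → lp (fun _ : ℕ => ℝ) 1) :
    projTensorNorm (∑ i, ((WithLp.equiv (ENNReal.ofReal p) (Fin n → ℝ)).symm
        (Pi.single i (1 : ℝ))) ⊗ₜ[ℝ] x i)
      = ∑' j : ℕ, (∑ i, |(x i : ∀ _ : ℕ, ℝ) j| ^ p) ^ (1 / p) := by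
  classical
  have hp0 : 0 < p := lt_of_lt_of_le one_pos hp
  have htR : (ENNReal.ofReal p).toReal = p := ENNReal.toReal_ofReal hp0.le
  have htR0 : 0 < (ENNReal.ofReal p).toReal := by rw [htR]; exact hp0
  have h1R : 0 < (1 : ℝ≥0∞).toReal := by simp
  set t : Fin n → ℕ → ℝ := fun i j => (x i : ∀ _ : ℕ, ℝ) j with ht
  set δ : Fin n → WithLp (ENNReal.ofReal p) (Fin n → ℝ) :=
    fun i => (WithLp.equiv (ENNReal.ofReal p) (Fin n → ℝ)).symm (Pi.single i (1 : ℝ)) with hδ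
  set v : ℕ → WithLp (ENNReal.ofReal p) (Fin n → ℝ) :=
    fun j => (WithLp.equiv (ENNReal.ofReal p) (Fin n → ℝ)).symm (fun i => t i j) with hv
  set Nr : ℕ → ℝ := fun j => (∑ i, |t i j| ^ p) ^ (1 / p) with hNr
  -- basic norm computations
  have hδnorm : ∀ i, ‖δ i‖ = 1 := by
    intro i
    rw [PiLp.norm_eq_sum htR0, htR]
    have h1 : ∀ k : Fin n, ‖(δ i) k‖ ^ p = if k = i then (1:ℝ) else 0 := by
      intro k
      simp only [hδ, WithLp.equiv_symm_apply, PiLp.toLp_apply, Pi.single_apply]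
      by_cases h : k = i <;> simp [h, Real.zero_rpow hp0.ne']
    rw [Finset.sum_congr rfl fun k _ => h1 k,
      Finset.sum_ite_eq' Finset.univ i fun _ => (1:ℝ)]
    simp
  have hvnorm : ∀ j, ‖v j‖ = Nr j := by
    intro j
    rw [PiLp.norm_eq_sum htR0, htR]
    show (∑ i, ‖(v j) i‖ ^ p) ^ (1 / p) = (∑ i, |t i j| ^ p) ^ (1 / p)
    have hcoord : ∀ i : Fin n, ‖(v j) i‖ = |t i j| := fun i => by
      simp [hv, WithLp.equiv_symm_apply, PiLp.toLp_apply, Real.norm_eq_abs]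
    clear hcoord
    congr 1
  have hl1norm : ∀ f : lp (fun _ : ℕ => ℝ) 1, ‖f‖ = ∑' j, |(f : ∀ _ : ℕ, ℝ) j| := by
    intro f
    rw [lp.norm_eq_tsum_rpow h1R f]
    simp [Real.norm_eq_abs]
  have hl1summ : ∀ f : lp (fun _ : ℕ => ℝ) 1, Summable fun j => |(f : ∀ _ : ℕ, ℝ) j| := by
    intro f
    have := (lp.memℓp f).summable h1R
    simpa [Real.norm_eq_abs] using this
  -- `v j` as a sum of `δ i`'s
  have hveq : ∀ j, v j = ∑ i, t i j • δ i := by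
    intro j
    have h1 : ((fun i => t i j) : Fin n → ℝ) = ∑ i, t i j • (Pi.single i (1 : ℝ) : Fin n → ℝ) := by
      funext k
      rw [Finset.sum_apply]
      simp [Pi.single_apply, mul_comm]
    calc v j = (WithLp.linearEquiv (ENNReal.ofReal p) ℝ (Fin n → ℝ)).symm
          (∑ i, t i j • (Pi.single i (1 : ℝ) : Fin n → ℝ)) := by
          show (WithLp.equiv (ENNReal.ofReal p) (Fin n → ℝ)).symm (fun i => t i j) = _
          rw [← h1]
          rfl
      _ = ∑ i, t i j • δ i := by
          rw [map_sum]
          exact Finset.sum_congr rfl fun i _ => by rw [map_smul]; rfl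
  -- comparison `Nr j ≤ ∑ i, |t i j|` and summability of `Nr`
  have hNr_nonneg : ∀ j, 0 ≤ Nr j := by
    intro j
    apply Real.rpow_nonneg
    exact Finset.sum_nonneg fun i _ => Real.rpow_nonneg (abs_nonneg _) _
  have hNle : ∀ j, Nr j ≤ ∑ i, |t i j| := by
    intro j
    set S := ∑ i, |t i j| with hS
    have hS0 : 0 ≤ S := Finset.sum_nonneg fun i _ => abs_nonneg _
    have key : ∑ i, |t i j| ^ p ≤ S ^ p := by
      have step : ∀ i : Fin n, |t i j| ^ p ≤ |t i j| * S ^ (p - 1) := by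
        intro i
        rcases eq_or_lt_of_le (abs_nonneg (t i j)) with h | h
        · rw [← h, Real.zero_rpow hp0.ne', zero_mul]
        · have hle : |t i j| ≤ S :=
            Finset.single_le_sum (fun i _ => abs_nonneg (t i j)) (Finset.mem_univ i)
          have : |t i j| ^ p = |t i j| ^ (1:ℝ) * |t i j| ^ (p - 1) := by
            rw [← Real.rpow_add h]; ring_nf
          rw [this, Real.rpow_one]
          exact mul_le_mul_of_nonneg_left
            (Real.rpow_le_rpow (abs_nonneg _) hle (by linarith)) (abs_nonneg _)
      calc ∑ i, |t i j| ^ p ≤ ∑ i, |t i j| * S ^ (p - 1) := Finset.sum_le_sum fun i _ => step i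
        _ = S * S ^ (p - 1) := by rw [← Finset.sum_mul]
        _ ≤ S ^ p := by
            rcases eq_or_lt_of_le hS0 with h | h
            · rw [← h, zero_mul]
              exact Real.rpow_nonneg le_rfl p
            · have : S ^ p = S ^ (1 + (p - 1) : ℝ) := by ring_nf
              rw [this, Real.rpow_add h, Real.rpow_one]
    calc Nr j = (∑ i, |t i j| ^ p) ^ (1 / p) := rfl
      _ ≤ (S ^ p) ^ (1 / p) := Real.rpow_le_rpow
            (Finset.sum_nonneg fun i _ => Real.rpow_nonneg (abs_nonneg _) _) key
            (by positivity)
      _ = S := by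
          rw [← Real.rpow_mul hS0, mul_one_div, div_self hp0.ne', Real.rpow_one]
  have hNsum : Summable Nr := by
    refine Summable.of_nonneg_of_le hNr_nonneg hNle ?_
    exact summable_sum fun i _ => hl1summ (x i)
  -- ### Upper bound
  have hub : projTensorNorm (∑ i, δ i ⊗ₜ[ℝ] x i) ≤ ∑' j, Nr j := by
    set c : ℕ → ℝ := fun M =>
      ∑ j ∈ Finset.range M, Nr j + ∑ i, (‖x i‖ - ∑ j ∈ Finset.range M, |t i j|) with hc
    have hcM : ∀ M : ℕ, projTensorNorm (∑ i, δ i ⊗ₜ[ℝ] x i) ≤ c M := by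
      intro M
      set a : Fin M ⊕ Fin n → WithLp (ENNReal.ofReal p) (Fin n → ℝ) :=
        Sum.elim (fun j => v (j : ℕ)) δ with ha
      set b : Fin M ⊕ Fin n → lp (fun _ : ℕ => ℝ) 1 :=
        Sum.elim (fun j => lp.single (E := fun _ : ℕ => ℝ) 1 (j : ℕ) (1 : ℝ))
          (fun i => x i - ∑ j ∈ Finset.range M, lp.single (E := fun _ : ℕ => ℝ) 1 j (t i j)) with hb
      have hsingle_smul : ∀ (j : ℕ) (r : ℝ), lp.single (E := fun _ : ℕ => ℝ) 1 j r =
          r • lp.single (E := fun _ : ℕ => ℝ) 1 j (1 : ℝ) := by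
        intro j r
        have h := lp.single_smul (𝕜 := ℝ) (E := fun _ : ℕ => ℝ) 1 j r (1 : ℝ)
        rw [smul_eq_mul, mul_one] at h
        exact h
      have hrepr : (∑ i, δ i ⊗ₜ[ℝ] x i) = ∑ k, a k ⊗ₜ[ℝ] b k := by
        rw [Fintype.sum_sum_type]
        simp only [ha, hb, Sum.elim_inl, Sum.elim_inr]
        have h2 : ∑ i, δ i ⊗ₜ[ℝ] (x i - ∑ j ∈ Finset.range M, lp.single (E := fun _ : ℕ => ℝ) 1 j (t i j))
            = ∑ i, δ i ⊗ₜ[ℝ] x i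
              - ∑ i, ∑ j ∈ Finset.range M, δ i ⊗ₜ[ℝ] lp.single (E := fun _ : ℕ => ℝ) 1 j (t i j) := by
          rw [← Finset.sum_sub_distrib]
          refine Finset.sum_congr rfl fun i _ => ?_
          rw [TensorProduct.tmul_sub, TensorProduct.tmul_sum]
        rw [h2]
        have h3 : ∑ j : Fin M, v (j : ℕ) ⊗ₜ[ℝ] lp.single (E := fun _ : ℕ => ℝ) 1 (j : ℕ) (1 : ℝ)
            = ∑ i, ∑ j ∈ Finset.range M, δ i ⊗ₜ[ℝ] lp.single (E := fun _ : ℕ => ℝ) 1 j (t i j) := by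
          rw [Finset.sum_comm]
          rw [← Fin.sum_univ_eq_sum_range
            (fun j => ∑ i, δ i ⊗ₜ[ℝ] lp.single (E := fun _ : ℕ => ℝ) 1 j (t i j)) M]
          refine Finset.sum_congr rfl fun j _ => ?_
          rw [hveq, TensorProduct.sum_tmul]
          refine Finset.sum_congr rfl fun i _ => ?_
          rw [hsingle_smul (j : ℕ) (t i (j : ℕ)), TensorProduct.tmul_smul,
            TensorProduct.smul_tmul']
        rw [h3]
        abel
      have hcost : ∑ k, ‖a k‖ * ‖b k‖ = c M := by
        rw [Fintype.sum_sum_type]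
        simp only [ha, hb, Sum.elim_inl, Sum.elim_inr]
        congr 1
        · rw [← Fin.sum_univ_eq_sum_range (fun j => Nr j) M]
          refine Finset.sum_congr rfl fun j _ => ?_
          have h4 : ‖lp.single (E := fun _ : ℕ => ℝ) 1 (j : ℕ) (1 : ℝ)‖ = 1 := by
            have := lp.norm_single (E := fun _ : ℕ => ℝ) (p := 1) one_pos (j : ℕ) (1 : ℝ)
            simpa using this
          rw [hvnorm, h4, mul_one]
        · refine Finset.sum_congr rfl fun i _ => ?_
          rw [hδnorm, one_mul]
          have h5 := lp.norm_compl_sum_single h1R (x i) (Finset.range M)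
          simp only [ENNReal.toReal_one, Real.rpow_one] at h5
          exact h5
      calc projTensorNorm (∑ i, δ i ⊗ₜ[ℝ] x i)
          ≤ ∑ k, ‖a k‖ * ‖b k‖ := by rw [hrepr]; exact projTensorNorm_le_sum a b
        _ = c M := hcost
    have htend : Tendsto c atTop (nhds (∑' j, Nr j)) := by
      have t1 : Tendsto (fun M => ∑ j ∈ Finset.range M, Nr j) atTop (nhds (∑' j, Nr j)) :=
        hNsum.hasSum.tendsto_sum_nat
      have t2 : Tendsto (fun M => ∑ i, (‖x i‖ - ∑ j ∈ Finset.range M, |t i j|)) atTop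
          (nhds 0) := by
        have : Tendsto (fun M => ∑ i, (‖x i‖ - ∑ j ∈ Finset.range M, |t i j|)) atTop
            (nhds (∑ i : Fin n, (0:ℝ))) := by
          refine tendsto_finset_sum _ fun i _ => ?_
          have t3 : Tendsto (fun M => ∑ j ∈ Finset.range M, |t i j|) atTop
              (nhds (∑' j, |t i j|)) := (hl1summ (x i)).hasSum.tendsto_sum_nat
          have := tendsto_const_nhds (x := ‖x i‖) (f := atTop (α := ℕ)) |>.sub t3
          rw [hl1norm (x i)] at this ⊢
          simpa [ht] using this
        simpa using this
      have h6 := t1.add t2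
      rw [add_zero] at h6
      exact h6
    exact ge_of_tendsto' htend hcM
  -- ### Lower bound
  have hlb : (∑' j, Nr j) ≤ projTensorNorm (∑ i, δ i ⊗ₜ[ℝ] x i) := by
    -- norming functionals
    have hφ : ∀ j, ∃ g : WithLp (ENNReal.ofReal p) (Fin n → ℝ) →L[ℝ] ℝ,
        ‖g‖ ≤ 1 ∧ g (v j) = ‖v j‖ := fun j => exists_dual_vector'' ℝ (v j)
    choose φ hφ1 hφ2 using hφ
    have hφbound : ∀ (j : ℕ) (a : WithLp (ENNReal.ofReal p) (Fin n → ℝ)),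
        |φ j a| ≤ ‖a‖ := by
      intro j a
      calc |φ j a| = ‖φ j a‖ := (Real.norm_eq_abs _).symm
        _ ≤ ‖φ j‖ * ‖a‖ := (φ j).le_opNorm a
        _ ≤ 1 * ‖a‖ := mul_le_mul_of_nonneg_right (hφ1 j) (norm_nonneg a)
        _ = ‖a‖ := one_mul _
    have key : ∀ (a : WithLp (ENNReal.ofReal p) (Fin n → ℝ)) (b : lp (fun _ : ℕ => ℝ) 1),
        Summable fun j => φ j a * (b : ∀ _ : ℕ, ℝ) j := by
      intro a b
      apply Summable.of_abs
      refine Summable.of_nonneg_of_le (fun j => abs_nonneg _) (fun j => ?_)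
        ((hl1summ b).mul_left ‖a‖)
      rw [abs_mul]
      exact mul_le_mul_of_nonneg_right (hφbound j a) (abs_nonneg _)
    let B : WithLp (ENNReal.ofReal p) (Fin n → ℝ) →ₗ[ℝ]
        lp (fun _ : ℕ => ℝ) 1 →ₗ[ℝ] ℝ :=
      LinearMap.mk₂ ℝ (fun a b => ∑' j, φ j a * (b : ∀ _ : ℕ, ℝ) j)
        (fun a a' b => by
          rw [← Summable.tsum_add (key a b) (key a' b)]
          exact tsum_congr fun j => by rw [map_add, add_mul])
        (fun r a b => by
          rw [smul_eq_mul, ← tsum_mul_left]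
          exact tsum_congr fun j => by rw [map_smul, smul_eq_mul, mul_assoc])
        (fun a b b' => by
          rw [← Summable.tsum_add (key a b) (key a b')]
          refine tsum_congr fun j => ?_
          have : ((b + b' : lp (fun _ : ℕ => ℝ) 1) : ∀ _ : ℕ, ℝ) j
              = (b : ∀ _ : ℕ, ℝ) j + (b' : ∀ _ : ℕ, ℝ) j := by
            rw [lp.coeFn_add]; rfl
          rw [this, mul_add])
        (fun r a b => by
          rw [smul_eq_mul, ← tsum_mul_left]
          refine tsum_congr fun j => ?_
          have : ((r • b : lp (fun _ : ℕ => ℝ) 1) : ∀ _ : ℕ, ℝ) j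
              = r * (b : ∀ _ : ℕ, ℝ) j := by
            rw [lp.coeFn_smul]; rfl
          rw [this]; ring)
    have hBle : ∀ (a : WithLp (ENNReal.ofReal p) (Fin n → ℝ)) (b : lp (fun _ : ℕ => ℝ) 1),
        |B a b| ≤ ‖a‖ * ‖b‖ := by
      intro a b
      have habs : Summable fun j => |φ j a * (b : ∀ _ : ℕ, ℝ) j| := (key a b).abs
      calc |B a b| = |∑' j, φ j a * (b : ∀ _ : ℕ, ℝ) j| := by
            simp only [B, LinearMap.mk₂_apply]
        _ ≤ ∑' j, |φ j a * (b : ∀ _ : ℕ, ℝ) j| := by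
            have := norm_tsum_le_tsum_norm (f := fun j => φ j a * (b : ∀ _ : ℕ, ℝ) j)
              (by simpa only [Real.norm_eq_abs] using habs)
            simpa only [Real.norm_eq_abs] using this
        _ ≤ ∑' j, ‖a‖ * |(b : ∀ _ : ℕ, ℝ) j| := by
            refine Summable.tsum_le_tsum (fun j => ?_) habs ((hl1summ b).mul_left ‖a‖)
            rw [abs_mul]
            exact mul_le_mul_of_nonneg_right (hφbound j a) (abs_nonneg _)
        _ = ‖a‖ * ∑' j, |(b : ∀ _ : ℕ, ℝ) j| := tsum_mul_left
        _ = ‖a‖ * ‖b‖ := by rw [hl1norm b]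
    let L := TensorProduct.lift B
    have hLx : L (∑ i, δ i ⊗ₜ[ℝ] x i) = ∑' j, Nr j := by
      have h1 : L (∑ i, δ i ⊗ₜ[ℝ] x i) = ∑ i, B (δ i) (x i) := by
        rw [map_sum]
        exact Finset.sum_congr rfl fun i _ => TensorProduct.lift.tmul _ _
      rw [h1]
      have h2 : ∀ i : Fin n, B (δ i) (x i) = ∑' j, φ j (δ i) * t i j := fun i => by
        simp only [B, LinearMap.mk₂_apply]
        try rfl
      rw [Finset.sum_congr rfl fun i _ => h2 i]
      rw [← Summable.tsum_finsetSum (fun i _ => key (δ i) (x i))]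
      refine tsum_congr fun j => ?_
      have h3 : ∑ i, φ j (δ i) * t i j = φ j (v j) := by
        rw [hveq j, map_sum]
        refine Finset.sum_congr rfl fun i _ => ?_
        rw [map_smul, smul_eq_mul, mul_comm]
      rw [h3, hφ2 j, hvnorm j]
    refine le_csInf ⟨∑ k, ‖δ k‖ * ‖x k‖, n, δ, x, rfl, rfl⟩ ?_
    rintro c ⟨m, a, b, hab, rfl⟩
    calc (∑' j, Nr j) = L (∑ i, δ i ⊗ₜ[ℝ] x i) := hLx.symm
      _ = ∑ k, B (a k) (b k) := by
          rw [hab, map_sum]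
          exact Finset.sum_congr rfl fun k _ => TensorProduct.lift.tmul _ _
      _ ≤ |∑ k, B (a k) (b k)| := le_abs_self _
      _ ≤ ∑ k, |B (a k) (b k)| := Finset.abs_sum_le_sum_abs _ _
      _ ≤ ∑ k, ‖a k‖ * ‖b k‖ := Finset.sum_le_sum fun k _ => hBle _ _
  exact le_antisymm hub hlb
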